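/- Let G be a prime (P6, bull)-free graph containing an induced G7: an induced 5-cycle C on c1,...,c5 (edges c_i c_{i+1} mod 5) together with vertices d, x where d is adjacent exactly to c1, c4, x among these vertices and x is adjacent only to d. Let F be the set of vertices outside C with exactly four neighbors on C. Then every vertex of F is complete to {c1,c2,c3,c4} and anticomplete to {c5, d, x}. -/

import Mathlib

set_option maxRecDepth 4000

open SimpleGraph

variable {V : Type*}

/-- The vertices `a b c d e` induce a bull in `G` (edges ab, bc, cd, be, ce). -/
def IsBull (G : SimpleGraph V) (a b c d e : V) : Prop :=
  a ≠ b ∧ a ≠ c ∧ a ≠ d ∧ a ≠ e ∧ b ≠ c ∧ b ≠ d ∧ b ≠ e ∧ c ≠ d ∧ c ≠ e ∧ d ≠ e ∧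
  G.Adj a b ∧ G.Adj b c ∧ G.Adj c d ∧ G.Adj b e ∧ G.Adj c e ∧
  ¬ G.Adj a c ∧ ¬ G.Adj a d ∧ ¬ G.Adj a e ∧ ¬ G.Adj b d ∧ ¬ G.Adj d e

/-- `G` contains no induced bull. -/
def BullFree (G : SimpleGraph V) : Prop := ∀ a b c d e : V, ¬ IsBull G a b c d e

/-- `G` contains no induced path on six vertices. -/
def P6Free (G : SimpleGraph V) : Prop :=
  ¬ ∃ p : Fin 6 → V, Function.Injective p ∧
      ∀ i j : Fin 6, G.Adj (p i) (p j) ↔ (i.val + 1 = j.val ∨ j.val + 1 = i.val)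

/-- `c` lists the vertices of an induced 5-cycle in `G` (indices mod 5). -/
def IsInducedC5 (G : SimpleGraph V) (c : Fin 5 → V) : Prop :=
  Function.Injective c ∧ ∀ i j : Fin 5, G.Adj (c i) (c j) ↔ (j = i + 1 ∨ i = j + 1)

/-- `S` is a homogeneous set in `G`. -/
def IsHomogeneous (G : SimpleGraph V) (S : Set V) : Prop :=
  ∀ v ∉ S, (∀ s ∈ S, G.Adj v s) ∨ (∀ s ∈ S, ¬ G.Adj v s)

/-- `S` is a proper homogeneous set: homogeneous, of size at least two, not all of `V`. -/
def IsProperHomogeneous (G : SimpleGraph V) (S : Set V) : Prop :=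
  IsHomogeneous G S ∧ (∃ a ∈ S, ∃ b ∈ S, a ≠ b) ∧ S ≠ Set.univ

/-- A graph is prime if it has no proper homogeneous set. -/
def IsPrimeGraph (G : SimpleGraph V) : Prop := ¬ ∃ S : Set V, IsProperHomogeneous G S

/-- Number of neighbors of `x` on the 5-cycle `c`. -/
def nbrCount (G : SimpleGraph V) [DecidableRel G.Adj] (c : Fin 5 → V) (x : V) : ℕ :=
  (Finset.univ.filter fun i : Fin 5 => G.Adj x (c i)).card

lemma bull_helper (G : SimpleGraph V) (hB : BullFree G) (a b c d e : V)
    (hab : G.Adj a b) (hbc : G.Adj b c) (hcd : G.Adj c d) (hbe : G.Adj b e) (hce : G.Adj c e)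
    (nac : ¬G.Adj a c) (nad : ¬G.Adj a d) (nae : ¬G.Adj a e)
    (nbd : ¬G.Adj b d) (nde : ¬G.Adj d e) : False := by
  refine hB a b c d e ⟨hab.ne, ?_, ?_, ?_, hbc.ne, ?_, hbe.ne, hcd.ne, hce.ne, ?_,
    hab, hbc, hcd, hbe, hce, nac, nad, nae, nbd, nde⟩
  · intro h; subst h; exact nad hcd
  · intro h; subst h; exact nbd hab.symm
  · intro h; subst h; exact nac hce.symm
  · intro h; subst h; exact nad hab
  · intro h; subst h; exact nbd hbe

lemma p6_helper (G : SimpleGraph V) (hP : P6Free G) (v0 v1 v2 v3 v4 v5 : V)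
    (e01 : G.Adj v0 v1) (e12 : G.Adj v1 v2) (e23 : G.Adj v2 v3)
    (e34 : G.Adj v3 v4) (e45 : G.Adj v4 v5)
    (n02 : ¬G.Adj v0 v2) (n03 : ¬G.Adj v0 v3) (n04 : ¬G.Adj v0 v4) (n05 : ¬G.Adj v0 v5)
    (n13 : ¬G.Adj v1 v3) (n14 : ¬G.Adj v1 v4) (n15 : ¬G.Adj v1 v5)
    (n24 : ¬G.Adj v2 v4) (n25 : ¬G.Adj v2 v5) (n35 : ¬G.Adj v3 v5) : False := by
  have d02 : v0 ≠ v2 := fun h => n03 (h ▸ e23)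
  have d03 : v0 ≠ v3 := fun h => n04 (h ▸ e34)
  have d04 : v0 ≠ v4 := fun h => n05 (h ▸ e45)
  have d05 : v0 ≠ v5 := fun h => n15 ((h ▸ e01).symm)
  have d13 : v1 ≠ v3 := fun h => n14 (h ▸ e34)
  have d14 : v1 ≠ v4 := fun h => n15 (h ▸ e45)
  have d15 : v1 ≠ v5 := fun h => n05 (h ▸ e01)
  have d24 : v2 ≠ v4 := fun h => n25 (h ▸ e45)
  have d25 : v2 ≠ v5 := fun h => n15 (h ▸ e12)
  have d35 : v3 ≠ v5 := fun h => n25 (h ▸ e23)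
  have s01 := e01.symm; have s12 := e12.symm; have s23 := e23.symm
  have s34 := e34.symm; have s45 := e45.symm
  have m20 : ¬G.Adj v2 v0 := fun h => n02 h.symm
  have m30 : ¬G.Adj v3 v0 := fun h => n03 h.symm
  have m40 : ¬G.Adj v4 v0 := fun h => n04 h.symm
  have m50 : ¬G.Adj v5 v0 := fun h => n05 h.symm
  have m31 : ¬G.Adj v3 v1 := fun h => n13 h.symm
  have m41 : ¬G.Adj v4 v1 := fun h => n14 h.symm
  have m51 : ¬G.Adj v5 v1 := fun h => n15 h.symm
  have m42 : ¬G.Adj v4 v2 := fun h => n24 h.symm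
  have m52 : ¬G.Adj v5 v2 := fun h => n25 h.symm
  have m53 : ¬G.Adj v5 v3 := fun h => n35 h.symm
  have l0 := G.loopless.irrefl v0; have l1 := G.loopless.irrefl v1; have l2 := G.loopless.irrefl v2
  have l3 := G.loopless.irrefl v3; have l4 := G.loopless.irrefl v4; have l5 := G.loopless.irrefl v5
  have r0 : ![v0,v1,v2,v3,v4,v5] 0 = v0 := rfl
  have r1 : ![v0,v1,v2,v3,v4,v5] 1 = v1 := rfl
  have r2 : ![v0,v1,v2,v3,v4,v5] 2 = v2 := rfl
  have r3 : ![v0,v1,v2,v3,v4,v5] 3 = v3 := rfl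
  have r4 : ![v0,v1,v2,v3,v4,v5] 4 = v4 := rfl
  have r5 : ![v0,v1,v2,v3,v4,v5] 5 = v5 := rfl
  apply hP
  refine ⟨![v0,v1,v2,v3,v4,v5], ?_, ?_⟩
  · intro i j hij
    fin_cases i <;> fin_cases j <;> simp_all
  · intro i j
    fin_cases i <;> fin_cases j <;> simp_all

theorem stmt10 (G : SimpleGraph V) [DecidableRel G.Adj]
    (hP : P6Free G) (hB : BullFree G) (hPr : IsPrimeGraph G)
    (c : Fin 5 → V) (hc : IsInducedC5 G c)
    (d : V) (hd : d ∉ Set.range c)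
    (hd0 : G.Adj d (c 0)) (hd3 : G.Adj d (c 3))
    (hdno : ∀ i : Fin 5, i ≠ 0 → i ≠ 3 → ¬ G.Adj d (c i))
    (x : V) (hx : x ∉ Set.range c) (hxd : G.Adj x d) (hxne : x ≠ d)
    (hx0 : ∀ i : Fin 5, ¬ G.Adj x (c i)) :
    ∀ f : V, f ∉ Set.range c → nbrCount G c f = 4 →
      (∀ i : Fin 5, i ≠ 4 → G.Adj f (c i)) ∧
      ¬ G.Adj f (c 4) ∧ ¬ G.Adj f d ∧ ¬ G.Adj f x := by
  intro f hfr hf4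
  -- cycle adjacency helpers
  have hcc : ∀ i j : Fin 5, (j = i + 1 ∨ i = j + 1) → G.Adj (c i) (c j) :=
    fun i j h => (hc.2 i j).mpr h
  have hcn : ∀ i j : Fin 5, ¬(j = i + 1 ∨ i = j + 1) → ¬G.Adj (c i) (c j) :=
    fun i j h ha => h ((hc.2 i j).mp ha)
  have hd1 : ¬G.Adj d (c 1) := hdno 1 (by decide) (by decide)
  have hd2 : ¬G.Adj d (c 2) := hdno 2 (by decide) (by decide)
  have hd4 : ¬G.Adj d (c 4) := hdno 4 (by decide) (by decide)
  -- exactly one non-neighbor on the cycle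
  have h5 : (Finset.univ.filter fun i : Fin 5 => ¬ G.Adj f (c i)).card = 1 := by
    have h := Finset.card_filter_add_card_filter_not
      (s := (Finset.univ : Finset (Fin 5))) (p := fun i : Fin 5 => G.Adj f (c i))
    have hu : (Finset.univ : Finset (Fin 5)).card = 5 := by decide
    unfold nbrCount at hf4
    omega
  obtain ⟨k, hk⟩ := Finset.card_eq_one.mp h5
  have hmem : ∀ i : Fin 5, ¬G.Adj f (c i) ↔ i = k := by
    intro i
    constructor
    · intro h
      have : i ∈ Finset.univ.filter fun i : Fin 5 => ¬ G.Adj f (c i) := by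
        simp [Finset.mem_filter, h]
      rw [hk, Finset.mem_singleton] at this; exact this
    · intro h
      have : k ∈ Finset.univ.filter fun i : Fin 5 => ¬ G.Adj f (c i) := by
        rw [hk]; exact Finset.mem_singleton_self k
      rw [Finset.mem_filter] at this
      exact h ▸ this.2
  have hnk : ¬G.Adj f (c k) := (hmem k).mpr rfl
  have hfi : ∀ i : Fin 5, i ≠ k → G.Adj f (c i) := by
    intro i hi
    by_contra h
    exact hi ((hmem i).mp h)
  rcases (by decide : ∀ m : Fin 5, m = 0 ∨ m = 1 ∨ m = 2 ∨ m = 3 ∨ m = 4) k with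
    rfl | rfl | rfl | rfl | rfl
  · -- k = 0 : f misses c0
    exfalso
    by_cases hfx : G.Adj f x
    · -- bull (c0, c1, f, x, c2)
      exact bull_helper G hB (c 0) (c 1) f x (c 2)
        (hcc 0 1 (by decide)) ((hfi 1 (by decide)).symm) hfx
        (hcc 1 2 (by decide)) (hfi 2 (by decide))
        (fun h => hnk h.symm) (fun h => hx0 0 h.symm) (hcn 0 2 (by decide))
        (fun h => hx0 1 h.symm) (hx0 2)
    · by_cases hfd : G.Adj f d
      · -- bull (x, d, f, c1, c3)
        exact bull_helper G hB x d f (c 1) (c 3)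
          hxd hfd.symm (hfi 1 (by decide)) hd3 (hfi 3 (by decide))
          (fun h => hfx h.symm) (hx0 1) (hx0 3)
          hd1 (hcn 1 3 (by decide))
      · -- P6 : x - d - c0 - c4 - f - c2
        exact p6_helper G hP x d (c 0) (c 4) f (c 2)
          hxd hd0 (hcc 0 4 (by decide)) ((hfi 4 (by decide)).symm) (hfi 2 (by decide))
          (hx0 0) (hx0 4) (fun h => hfx h.symm) (hx0 2)
          hd4 (fun h => hfd h.symm) hd2
          (fun h => hnk h.symm) (hcn 0 2 (by decide)) (hcn 4 2 (by decide))
  · -- k = 1 : f misses c1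
    exfalso
    by_cases hfx : G.Adj f x
    · -- bull (c1, c2, f, x, c3)
      exact bull_helper G hB (c 1) (c 2) f x (c 3)
        (hcc 1 2 (by decide)) ((hfi 2 (by decide)).symm) hfx
        (hcc 2 3 (by decide)) (hfi 3 (by decide))
        (fun h => hnk h.symm) (fun h => hx0 1 h.symm) (hcn 1 3 (by decide))
        (fun h => hx0 2 h.symm) (hx0 3)
    · by_cases hfd : G.Adj f d
      · -- bull (x, d, f, c2, c0)
        exact bull_helper G hB x d f (c 2) (c 0)
          hxd hfd.symm (hfi 2 (by decide)) hd0 (hfi 0 (by decide))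
          (fun h => hfx h.symm) (hx0 2) (hx0 0)
          hd2 (hcn 2 0 (by decide))
      · -- bull (d, c0, f, c2, c4)
        exact bull_helper G hB d (c 0) f (c 2) (c 4)
          hd0 ((hfi 0 (by decide)).symm) (hfi 2 (by decide))
          (hcc 0 4 (by decide)) (hfi 4 (by decide))
          (fun h => hfd h.symm) hd2 hd4
          (hcn 0 2 (by decide)) (hcn 2 4 (by decide))
  · -- k = 2 : f misses c2
    exfalso
    by_cases hfx : G.Adj f x
    · -- bull (c2, c1, f, x, c0)
      exact bull_helper G hB (c 2) (c 1) f x (c 0)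
        (hcc 2 1 (by decide)) ((hfi 1 (by decide)).symm) hfx
        (hcc 1 0 (by decide)) (hfi 0 (by decide))
        (fun h => hnk h.symm) (fun h => hx0 2 h.symm) (hcn 2 0 (by decide))
        (fun h => hx0 1 h.symm) (hx0 0)
    · by_cases hfd : G.Adj f d
      · -- bull (x, d, f, c1, c3)
        exact bull_helper G hB x d f (c 1) (c 3)
          hxd hfd.symm (hfi 1 (by decide)) hd3 (hfi 3 (by decide))
          (fun h => hfx h.symm) (hx0 1) (hx0 3)
          hd1 (hcn 1 3 (by decide))
      · -- bull (d, c3, f, c1, c4)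
        exact bull_helper G hB d (c 3) f (c 1) (c 4)
          hd3 ((hfi 3 (by decide)).symm) (hfi 1 (by decide))
          (hcc 3 4 (by decide)) (hfi 4 (by decide))
          (fun h => hfd h.symm) hd1 hd4
          (hcn 3 1 (by decide)) (hcn 1 4 (by decide))
  · -- k = 3 : f misses c3
    exfalso
    by_cases hfx : G.Adj f x
    · -- bull (c3, c2, f, x, c1)
      exact bull_helper G hB (c 3) (c 2) f x (c 1)
        (hcc 3 2 (by decide)) ((hfi 2 (by decide)).symm) hfx
        (hcc 2 1 (by decide)) (hfi 1 (by decide))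
        (fun h => hnk h.symm) (fun h => hx0 3 h.symm) (hcn 3 1 (by decide))
        (fun h => hx0 2 h.symm) (hx0 1)
    · by_cases hfd : G.Adj f d
      · -- bull (x, d, f, c2, c0)
        exact bull_helper G hB x d f (c 2) (c 0)
          hxd hfd.symm (hfi 2 (by decide)) hd0 (hfi 0 (by decide))
          (fun h => hfx h.symm) (hx0 2) (hx0 0)
          hd2 (hcn 2 0 (by decide))
      · -- P6 : x - d - c3 - c4 - f - c1
        exact p6_helper G hP x d (c 3) (c 4) f (c 1)
          hxd hd3 (hcc 3 4 (by decide)) ((hfi 4 (by decide)).symm) (hfi 1 (by decide))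
          (hx0 3) (hx0 4) (fun h => hfx h.symm) (hx0 1)
          hd4 (fun h => hfd h.symm) hd1
          (fun h => hnk h.symm) (hcn 3 1 (by decide)) (hcn 4 1 (by decide))
  · -- k = 4 : the good case
    refine ⟨fun i hi => hfi i hi, hnk, ?_, ?_⟩
    · -- f not adjacent to d : else bull (c1, f, c3, c4, d)
      intro hfd
      exact bull_helper G hB (c 1) f (c 3) (c 4) d
        ((hfi 1 (by decide)).symm) (hfi 3 (by decide)) (hcc 3 4 (by decide))
        hfd hd3.symm
        (hcn 1 3 (by decide)) (hcn 1 4 (by decide)) (fun h => hd1 h.symm)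
        hnk (fun h => hd4 h.symm)
    · -- f not adjacent to x : else bull (x, f, c0, c4, c1)
      intro hfx
      exact bull_helper G hB x f (c 0) (c 4) (c 1)
        hfx.symm (hfi 0 (by decide)) (hcc 0 4 (by decide))
        (hfi 1 (by decide)) (hcc 0 1 (by decide))
        (hx0 0) (hx0 4) (hx0 1)
        hnk (hcn 4 1 (by decide))
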